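/- Suppose u(t,x,y) satisfies the Gaussian upper bound u(t,x,y) ≤ c·t^{-d/2}·exp(μt − ‖y−x‖²/(ct)) for all t > 0 and x,y ∈ ℝ^d (with c, μ > 0), and suppose m_k and m_{k-i}, m_i for 1 ≤ i ≤ k−1 each satisfy bounds of the form a·exp(at − ‖y−x‖²/(a(t+1))). Then the Duhamel convolution m_k(t,x,y) = ∫₀^t ∫_{ℝ^d} α(z)·h(s,z,y)·u(t−s,x,z) dz ds, where α is bounded and h(s,z,y) ≤ ã·exp(ãs − ‖y−z‖²/(ã(s+1))), satisfies a bound of the same form: m_k(t,x,y) ≤ a_k·exp(a_k t − ‖y−x‖²/(a_k(t+1))) for some a_k > 0. -/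

import Mathlib

open Real MeasureTheory

lemma gauss_integrable (d : ℕ) {b : ℝ} (hb : 0 < b) (x : EuclideanSpace ℝ (Fin d)) :
    Integrable (fun z : EuclideanSpace ℝ (Fin d) => Real.exp (-b * ‖z - x‖ ^ 2)) := by
  have h0 : Integrable (fun v : EuclideanSpace ℝ (Fin d) => Real.exp (-b * ‖v‖ ^ 2)) := by
    have h := (GaussianFourier.integrable_cexp_neg_mul_sq_norm_add (V := EuclideanSpace ℝ (Fin d))
        (b := (b : ℂ)) (by simpa using hb) 0 0).re
    refine h.congr (Filter.Eventually.of_forall fun v => ?_)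
    have : -(b : ℂ) * (‖v‖ : ℂ) ^ 2 = ((-b * ‖v‖ ^ 2 : ℝ) : ℂ) := by push_cast; ring
    simp only [RCLike.re_to_complex, zero_mul, add_zero, this, Complex.exp_ofReal_re]
  exact h0.comp_sub_right x

lemma gauss_integral (d : ℕ) {b : ℝ} (hb : 0 < b) (x : EuclideanSpace ℝ (Fin d)) :
    ∫ z : EuclideanSpace ℝ (Fin d), Real.exp (-b * ‖z - x‖ ^ 2) = (π / b) ^ ((d : ℝ) / 2) := by
  rw [integral_sub_right_eq_self (fun z : EuclideanSpace ℝ (Fin d) => Real.exp (-b * ‖z‖ ^ 2)) x,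
    GaussianFourier.integral_rexp_neg_mul_sq_norm hb]
  norm_num [finrank_euclideanSpace_fin]

set_option maxHeartbeats 2000000 in
theorem duhamel_gaussian_bound (d : ℕ)
    (u : ℝ → EuclideanSpace ℝ (Fin d) → EuclideanSpace ℝ (Fin d) → ℝ)
    (hunonneg : ∀ t x y, 0 ≤ u t x y)
    (c μ : ℝ) (hc : 0 < c) (hμ : 0 < μ)
    (hu : ∀ t : ℝ, 0 < t → ∀ x y,
      u t x y ≤ c * t ^ (-(d : ℝ) / 2) * Real.exp (μ * t - ‖y - x‖ ^ 2 / (c * t)))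
    (h : ℝ → EuclideanSpace ℝ (Fin d) → EuclideanSpace ℝ (Fin d) → ℝ)
    (hhnonneg : ∀ s z y, 0 ≤ h s z y)
    (atil : ℝ) (hatil : 0 < atil)
    (hh : ∀ s : ℝ, 0 < s → ∀ z y,
      h s z y ≤ atil * Real.exp (atil * s - ‖y - z‖ ^ 2 / (atil * (s + 1))))
    (α : EuclideanSpace ℝ (Fin d) → ℝ) (B : ℝ)
    (hα : ∀ z, 0 ≤ α z ∧ α z ≤ B)
    (mk : ℝ → EuclideanSpace ℝ (Fin d) → EuclideanSpace ℝ (Fin d) → ℝ)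
    (hmk : ∀ t x y, mk t x y =
      ∫ s in Set.Ioc (0 : ℝ) t, (∫ z, α z * h s z y * u (t - s) x z)) :
    ∃ ak : ℝ, 0 < ak ∧ ∀ t : ℝ, 0 < t → ∀ x y,
      mk t x y ≤ ak * Real.exp (ak * t - ‖y - x‖ ^ 2 / (ak * (t + 1))) := by
  have hB : 0 ≤ B := le_trans (hα 0).1 (hα 0).2
  set M : ℝ := max atil c with hMdef
  have hM : 0 < M := lt_max_of_lt_right hc
  set C0 : ℝ := B * atil * c * (2 * π * c) ^ ((d : ℝ) / 2) with hC0def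
  have hC0 : 0 ≤ C0 := by positivity
  set ak : ℝ := C0 + atil + μ + 1 + 4 * M with hakdef
  have hak : 0 < ak := by positivity
  refine ⟨ak, hak, fun t ht x y => ?_⟩
  have ht1 : (0 : ℝ) < t + 1 := by linarith
  set Q : ℝ := ‖y - x‖ ^ 2 / (4 * M * (t + 1)) with hQdef
  have hQ0 : 0 ≤ Q := by positivity
  have hrhs : (0 : ℝ) ≤ ak * Real.exp (ak * t - ‖y - x‖ ^ 2 / (ak * (t + 1))) := by positivity
  rw [hmk, MeasureTheory.integral_Ioc_eq_integral_Ioo]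
  by_cases hint : IntegrableOn (fun s => ∫ z, α z * h s z y * u (t - s) x z) (Set.Ioo 0 t)
  · -- pointwise (in s) bound on the inner integral
    have key : ∀ s ∈ Set.Ioo (0 : ℝ) t,
        (∫ z, α z * h s z y * u (t - s) x z) ≤ C0 * Real.exp ((atil + μ) * t - Q) := by
      intro s hs
      obtain ⟨hs0, hst⟩ := hs
      have hτ : 0 < t - s := by linarith
      set τ : ℝ := t - s with hτdef
      have hrhs2 : (0 : ℝ) ≤ C0 * Real.exp ((atil + μ) * t - Q) := by positivity
      set b : ℝ := 1 / (2 * c * τ) with hbdef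
      have hbpos : 0 < b := by positivity
      set D : ℝ := B * atil * c * τ ^ (-(d : ℝ) / 2) * Real.exp (atil * s + μ * τ - Q) with hDdef
      have hD0 : 0 ≤ D := by positivity
      have hpt : ∀ z, α z * h s z y * u τ x z ≤ D * Real.exp (-b * ‖z - x‖ ^ 2) := by
        intro z
        have h1 := hh s hs0 z y
        have h2 := hu τ hτ x z
        have step : α z * h s z y * u τ x z ≤
            B * (atil * Real.exp (atil * s - ‖y - z‖ ^ 2 / (atil * (s + 1)))) *
            (c * τ ^ (-(d : ℝ) / 2) * Real.exp (μ * τ - ‖z - x‖ ^ 2 / (c * τ))) := by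
          have hz := hα z
          refine mul_le_mul (mul_le_mul hz.2 h1 (hhnonneg s z y) hB) h2 (hunonneg τ x z) ?_
          positivity
        refine le_trans step ?_
        have hexp : (atil * s - ‖y - z‖ ^ 2 / (atil * (s + 1))) +
            (μ * τ - ‖z - x‖ ^ 2 / (c * τ)) ≤
            (atil * s + μ * τ - Q) + (-b * ‖z - x‖ ^ 2) := by
          have tri : ‖y - x‖ ≤ ‖y - z‖ + ‖z - x‖ := norm_sub_le_norm_sub_add_norm_sub _ _ _
          have sq2 : ‖y - x‖ ^ 2 ≤ 2 * ‖y - z‖ ^ 2 + 2 * ‖z - x‖ ^ 2 := by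
            nlinarith [norm_nonneg (y - x), norm_nonneg (y - z), norm_nonneg (z - x),
              sq_nonneg (‖y - z‖ - ‖z - x‖)]
          have hA1 : ‖y - z‖ ^ 2 / (2 * M * (t + 1)) ≤ ‖y - z‖ ^ 2 / (atil * (s + 1)) := by
            apply div_le_div_of_nonneg_left (by positivity) (by positivity)
            have hle : atil ≤ M := le_max_left _ _
            nlinarith
          have hA2 : ‖z - x‖ ^ 2 / (2 * M * (t + 1)) ≤ ‖z - x‖ ^ 2 / (2 * c * τ) := by
            apply div_le_div_of_nonneg_left (by positivity) (by positivity)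
            have hle : c ≤ M := le_max_right _ _
            nlinarith
          have hQle : Q ≤ ‖y - z‖ ^ 2 / (2 * M * (t + 1)) + ‖z - x‖ ^ 2 / (2 * M * (t + 1)) := by
            rw [hQdef, ← add_div]
            have e2 : (‖y - z‖ ^ 2 + ‖z - x‖ ^ 2) / (2 * M * (t + 1)) =
                (2 * ‖y - z‖ ^ 2 + 2 * ‖z - x‖ ^ 2) / (4 * M * (t + 1)) := by
              rw [div_eq_div_iff (by positivity) (by positivity)]; ring
            rw [e2]
            exact (div_le_div_iff_of_pos_right (by positivity)).mpr sq2
          have esplit : ‖z - x‖ ^ 2 / (c * τ) =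
              ‖z - x‖ ^ 2 / (2 * c * τ) + ‖z - x‖ ^ 2 / (2 * c * τ) := by
            rw [← add_div, div_eq_div_iff (by positivity) (by positivity)]; ring
          have ebs : -b * ‖z - x‖ ^ 2 = -(‖z - x‖ ^ 2 / (2 * c * τ)) := by
            rw [hbdef]; ring
          rw [ebs, esplit]
          linarith
        have lhs_eq : B * (atil * Real.exp (atil * s - ‖y - z‖ ^ 2 / (atil * (s + 1)))) *
            (c * τ ^ (-(d : ℝ) / 2) * Real.exp (μ * τ - ‖z - x‖ ^ 2 / (c * τ))) =
            (B * atil * c * τ ^ (-(d : ℝ) / 2)) *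
            Real.exp ((atil * s - ‖y - z‖ ^ 2 / (atil * (s + 1))) +
              (μ * τ - ‖z - x‖ ^ 2 / (c * τ))) := by
          rw [Real.exp_add]; ring
        have rhs_eq : D * Real.exp (-b * ‖z - x‖ ^ 2) =
            (B * atil * c * τ ^ (-(d : ℝ) / 2)) *
            Real.exp ((atil * s + μ * τ - Q) + (-b * ‖z - x‖ ^ 2)) := by
          rw [hDdef, Real.exp_add]; ring
        rw [lhs_eq, rhs_eq]
        exact mul_le_mul_of_nonneg_left (Real.exp_le_exp.mpr hexp) (by positivity)
      by_cases hfint : Integrable (fun z => α z * h s z y * u (t - s) x z)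
      · have hgint : Integrable
            (fun z : EuclideanSpace ℝ (Fin d) => D * Real.exp (-b * ‖z - x‖ ^ 2)) :=
          (gauss_integrable d hbpos x).const_mul D
        have hmono := integral_mono hfint hgint hpt
        rw [integral_const_mul, gauss_integral d hbpos x] at hmono
        refine hmono.trans ?_
        have hpib : π / b = (2 * π * c) * τ := by
          rw [hbdef]; field_simp
        have hpow : ((2 * π * c) * τ) ^ ((d : ℝ) / 2) =
            (2 * π * c) ^ ((d : ℝ) / 2) * τ ^ ((d : ℝ) / 2) :=
          Real.mul_rpow (by positivity) (le_of_lt hτ)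
        have hτpow : τ ^ (-(d : ℝ) / 2) * τ ^ ((d : ℝ) / 2) = 1 := by
          rw [← Real.rpow_add hτ, show -(d : ℝ) / 2 + (d : ℝ) / 2 = 0 by ring, Real.rpow_zero]
        have hDval : D * (π / b) ^ ((d : ℝ) / 2) =
            C0 * Real.exp (atil * s + μ * τ - Q) := by
          rw [hpib, hpow, hDdef, hC0def]
          calc B * atil * c * τ ^ (-(d : ℝ) / 2) * Real.exp (atil * s + μ * τ - Q) *
              ((2 * π * c) ^ ((d : ℝ) / 2) * τ ^ ((d : ℝ) / 2))
              = B * atil * c * (2 * π * c) ^ ((d : ℝ) / 2) *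
                Real.exp (atil * s + μ * τ - Q) *
                (τ ^ (-(d : ℝ) / 2) * τ ^ ((d : ℝ) / 2)) := by ring
            _ = _ := by rw [hτpow]; ring
        rw [hDval]
        apply mul_le_mul_of_nonneg_left _ hC0
        apply Real.exp_le_exp.mpr
        have : atil * s + μ * τ ≤ (atil + μ) * t := by
          rw [hτdef]; nlinarith
        linarith
      · rw [integral_undef hfint]
        exact hrhs2
    have hconst : IntegrableOn (fun _ : ℝ => C0 * Real.exp ((atil + μ) * t - Q))
        (Set.Ioo 0 t) := integrableOn_const measure_Ioo_lt_top.ne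
    have hmono2 := setIntegral_mono_on hint hconst measurableSet_Ioo key
    refine hmono2.trans ?_
    rw [setIntegral_const, measureReal_def, Real.volume_Ioo, smul_eq_mul]
    have hvol : (ENNReal.ofReal (t - 0)).toReal = t := by
      rw [ENNReal.toReal_ofReal (by linarith)]; ring
    rw [hvol]
    have httexp : t ≤ Real.exp t := (Real.add_one_le_exp t).trans' (by linarith)
    have hQak : ‖y - x‖ ^ 2 / (ak * (t + 1)) ≤ Q := by
      rw [hQdef]
      apply div_le_div_of_nonneg_left (by positivity) (by positivity)
      have h4M : 4 * M ≤ ak := by rw [hakdef]; linarith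
      nlinarith
    calc t * (C0 * Real.exp ((atil + μ) * t - Q))
        ≤ Real.exp t * (C0 * Real.exp ((atil + μ) * t - Q)) := by
          apply mul_le_mul_of_nonneg_right httexp (by positivity)
      _ = C0 * Real.exp ((atil + μ + 1) * t - Q) := by
          rw [show (atil + μ + 1) * t - Q = t + ((atil + μ) * t - Q) by ring, Real.exp_add]
          ring
      _ ≤ ak * Real.exp (ak * t - ‖y - x‖ ^ 2 / (ak * (t + 1))) := by
          apply mul_le_mul
          · rw [hakdef]; linarith
          · refine Real.exp_le_exp.mpr (sub_le_sub ?_ hQak)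
            apply mul_le_mul_of_nonneg_right _ (le_of_lt ht)
            rw [hakdef]; linarith
          · positivity
          · positivity
  · rw [integral_undef hint]
    exact hrhs
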